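/- Let F = (f_1,…,f_m) be a polynomial system over a real closed field R with coefficient matrix C ∈ R^{m×r} and exponent matrix A ∈ ℤ^{n×r} of full rank n ≤ r, i.e. f_i(x) = Σ_j C_{ij} x^{a_j} where a_j are the columns of A. Then the map x ↦ x^A := (x^{a_1},…,x^{a_r}) is a bijection from the positive solution set {x ∈ R^n_{>0} : f_1(x)=⋯=f_m(x)=0} onto {z ∈ R^r_{>0} : Cz = 0, z ∈ im(φ_A)}, with inverse z ↦ z^B for any rational right inverse B of A (AB = Id). -/

import Mathlib

/-- Let `F = (f₁,…,f_m)` be a polynomial system over a real closed field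
`R` with coefficient matrix `C ∈ R^{m×r}` and exponent matrix `A ∈ ℤ^{n×r}` of full rank
`n ≤ r`, i.e. `f_i x = ∑_j C i j * x ^ a_j` (columns `a_j` of `A`). Then `x ↦ x^A` maps the
positive solution set bijectively onto `{z ∈ R^r_{>0} : Cz = 0, z ∈ φ_A(R^n_{>0})}`, with
inverse `z ↦ z^B` for any rational right inverse `B` of `A` (rational powers of positive
elements via unique positive roots, encoded by `rpow`). -/
theorem stmt4 {R : Type*} [Field R] [LinearOrder R] [IsStrictOrderedRing R]
    -- real closedness of `R`
    (hsq : ∀ x : R, 0 ≤ x → ∃ y : R, y ^ 2 = x)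
    (hodd : ∀ p : Polynomial R, Odd p.natDegree → ∃ x : R, p.eval x = 0)
    -- rational powers of positive elements, via unique positive roots
    (rpow : R → ℚ → R)
    (hrpow_pos : ∀ x : R, 0 < x → ∀ q : ℚ, 0 < rpow x q)
    (hrpow_int : ∀ x : R, 0 < x → ∀ k : ℤ, rpow x (k : ℚ) = x ^ k)
    (hrpow_add : ∀ x : R, 0 < x → ∀ q q' : ℚ, rpow x (q + q') = rpow x q * rpow x q')
    (hrpow_mul : ∀ x y : R, 0 < x → 0 < y → ∀ q : ℚ, rpow (x * y) q = rpow x q * rpow y q)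
    (hrpow_rpow : ∀ x : R, 0 < x → ∀ q q' : ℚ, rpow (rpow x q) q' = rpow x (q * q'))
    {n m r : ℕ} (hnr : n ≤ r)
    (C : Matrix (Fin m) (Fin r) R) (A : Matrix (Fin n) (Fin r) ℤ)
    (hrank : (A.map ((↑) : ℤ → ℚ)).rank = n)
    (B : Matrix (Fin r) (Fin n) ℚ) (hB : (A.map ((↑) : ℤ → ℚ)) * B = 1) :
    let φ : (Fin n → R) → (Fin r → R) := fun x j => ∏ i, x i ^ A i j
    let ψ : (Fin r → R) → (Fin n → R) := fun z i => ∏ j, rpow (z j) (B j i)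
    let S₁ : Set (Fin n → R) :=
      {x | (∀ i, 0 < x i) ∧ ∀ k, ∑ j, C k j * ∏ i, x i ^ A i j = 0}
    let S₂ : Set (Fin r → R) :=
      {z | (∀ j, 0 < z j) ∧ (∀ k, ∑ j, C k j * z j = 0) ∧
        ∃ x : Fin n → R, (∀ i, 0 < x i) ∧ ∀ j, z j = ∏ i, x i ^ A i j}
    Set.BijOn φ S₁ S₂ ∧ Set.InvOn ψ φ S₁ S₂ := by

  intro φ ψ S₁ S₂
  have h0 : ∀ x : R, 0 < x → rpow x 0 = 1 := fun x hx => by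
    simpa using hrpow_int x hx 0
  have h1 : ∀ x : R, 0 < x → rpow x 1 = x := fun x hx => by
    simpa using hrpow_int x hx 1
  have hone : ∀ q : ℚ, rpow 1 q = 1 := by
    intro q
    have h := hrpow_mul 1 1 one_pos one_pos q
    rw [mul_one] at h
    have hp := hrpow_pos 1 one_pos q
    have h2 : rpow 1 q * 1 = rpow 1 q * rpow 1 q := by rw [mul_one]; exact h
    exact (mul_left_cancel₀ hp.ne' h2).symm
  have hprod : ∀ (q : ℚ) (s : Finset (Fin n)) (f : Fin n → R), (∀ i ∈ s, 0 < f i) →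
      rpow (∏ i ∈ s, f i) q = ∏ i ∈ s, rpow (f i) q := by
    intro q s
    induction s using Finset.induction_on with
    | empty => intro f _; simpa using hone q
    | @insert a s' ha ih =>
      intro f hf
      rw [Finset.prod_insert ha, Finset.prod_insert ha,
        hrpow_mul _ _ (hf a (Finset.mem_insert_self _ _))
          (Finset.prod_pos fun i hi => hf i (Finset.mem_insert_of_mem hi)) q,
        ih f (fun i hi => hf i (Finset.mem_insert_of_mem hi))]
  have hsum : ∀ (x : R), 0 < x → ∀ (s : Finset (Fin r)) (g : Fin r → ℚ),
      rpow x (∑ j ∈ s, g j) = ∏ j ∈ s, rpow x (g j) := by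
    intro x hx s
    induction s using Finset.induction_on with
    | empty => intro g; simpa using h0 x hx
    | @insert a s' ha ih =>
      intro g
      rw [Finset.sum_insert ha, Finset.prod_insert ha, hrpow_add x hx, ih]
  have key : ∀ x : Fin n → R, (∀ i, 0 < x i) → ψ (φ x) = x := by
    intro x hx
    funext i
    show (∏ j, rpow (∏ k, x k ^ A k j) (B j i)) = x i
    have step1 : ∀ j : Fin r, rpow (∏ k, x k ^ A k j) (B j i)
        = ∏ k, rpow (x k) ((A k j : ℚ) * B j i) := by
      intro j
      rw [hprod (B j i) Finset.univ _ (fun k _ => zpow_pos (hx k) _)]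
      refine Finset.prod_congr rfl fun k _ => ?_
      rw [← hrpow_int (x k) (hx k) (A k j), hrpow_rpow _ (hx k)]
    have hAB : ∀ k : Fin n, (∑ j, (A k j : ℚ) * B j i) = if k = i then 1 else 0 := by
      intro k
      have h := congrFun (congrFun hB k) i
      simpa [Matrix.mul_apply, Matrix.map_apply, Matrix.one_apply] using h
    calc (∏ j, rpow (∏ k, x k ^ A k j) (B j i))
        = ∏ j, ∏ k, rpow (x k) ((A k j : ℚ) * B j i) := Finset.prod_congr rfl fun j _ => step1 j
      _ = ∏ k, ∏ j, rpow (x k) ((A k j : ℚ) * B j i) := Finset.prod_comm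
      _ = ∏ k, rpow (x k) (∑ j, (A k j : ℚ) * B j i) :=
          Finset.prod_congr rfl fun k _ => (hsum (x k) (hx k) Finset.univ _).symm
      _ = ∏ k, rpow (x k) (if k = i then 1 else 0) :=
          Finset.prod_congr rfl fun k _ => by rw [hAB k]
      _ = x i := by
          rw [Finset.prod_eq_single i
            (fun k _ hk => by simp [hk, h0 (x k) (hx k)])
            (fun h => absurd (Finset.mem_univ i) h)]
          simp [h1 (x i) (hx i)]
  have hmt₁ : Set.MapsTo φ S₁ S₂ := by
    intro x hx
    obtain ⟨hxpos, hxeq⟩ := hx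
    refine ⟨fun j => Finset.prod_pos fun k _ => zpow_pos (hxpos k) _, fun k => hxeq k,
      x, hxpos, fun j => rfl⟩
  have hmt₂ : Set.MapsTo ψ S₂ S₁ := by
    rintro z ⟨hzpos, hzeq, x, hxpos, hzx⟩
    have hz : z = φ x := funext hzx
    have hxS : x ∈ S₁ := by
      refine ⟨hxpos, fun k => ?_⟩
      have := hzeq k
      simpa [hz] using this
    have : ψ z = x := by rw [hz, key x hxpos]
    rw [this]; exact hxS
  have hinv : Set.InvOn ψ φ S₁ S₂ := by
    constructor
    · intro x hx; exact key x hx.1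
    · rintro z ⟨hzpos, hzeq, x, hxpos, hzx⟩
      have hz : z = φ x := funext hzx
      rw [hz, key x hxpos]
  exact ⟨hinv.bijOn hmt₁ hmt₂, hinv⟩
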